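/- Let H be a connected graph and x, y two distinct vertices of H. Let G be obtained from H by attaching a pendant edge (a new vertex joined by an edge) at y, and G' obtained from H by attaching a pendant edge at x. Then N(G') − N(G) = N(H)_x − N(H)_y = N(H−y)_x − N(H−x)_y. -/

import Mathlib

open SimpleGraph

/-- Number of (nonempty) connected induced subgraphs of `G`. -/
noncomputable def numCIS {V : Type*} (G : SimpleGraph V) : ℕ :=
  Nat.card {s : Finset V // s.Nonempty ∧ (G.induce (↑s : Set V)).Connected}

/-- Number of connected induced subgraphs of `G` containing the vertex `v`. -/
noncomputable def numCISat {V : Type*} (G : SimpleGraph V) (v : V) : ℕ :=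
  Nat.card {s : Finset V // v ∈ s ∧ (G.induce (↑s : Set V)).Connected}

/-- Number of connected induced subgraphs of `G` containing both `u` and `v`. -/
noncomputable def numCISat2 {V : Type*} (G : SimpleGraph V) (u v : V) : ℕ :=
  Nat.card {s : Finset V // u ∈ s ∧ v ∈ s ∧ (G.induce (↑s : Set V)).Connected}

/-- Attach a pendant path with `k` new vertices at the vertex `u` of `G`
(so the resulting pendant path "of order `k + 1`" starts at `u`). -/
def attachPath {V : Type*} (G : SimpleGraph V) (u : V) (k : ℕ) :
    SimpleGraph (V ⊕ Fin k) :=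
  SimpleGraph.fromRel (fun a b =>
    (∃ x y, a = Sum.inl x ∧ b = Sum.inl y ∧ G.Adj x y) ∨
    (∃ i j : Fin k, a = Sum.inr i ∧ b = Sum.inr j ∧ (i : ℕ) + 1 = (j : ℕ)) ∨
    (∃ h : 0 < k, a = Sum.inl u ∧ b = Sum.inr ⟨0, h⟩))


-- helper 1: reachability along adj-collapsing maps
lemma reachHelper {α β : Type*} {G : SimpleGraph α} {G' : SimpleGraph β} (f : α → β)
    (h : ∀ a b, G.Adj a b → G'.Adj (f a) (f b) ∨ f a = f b) {u v : α}
    (r : G.Reachable u v) : G'.Reachable (f u) (f v) := by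
  obtain ⟨w⟩ := r
  induction w with
  | nil => exact Reachable.refl _
  | cons ha p ih =>
    rcases h _ _ ha with h' | h'
    · exact (h'.reachable).trans ih
    · rw [h']; exact ih

-- helper 2: connectivity transfer along bijections of vertex sets
lemma connHelper {α β : Type*} {G : SimpleGraph α} {G' : SimpleGraph β} {e : α → β}
    {s : Set α} {t : Set β} (he : Set.BijOn e s t)
    (hadj : ∀ a ∈ s, ∀ b ∈ s, G.Adj a b ↔ G'.Adj (e a) (e b)) :
    (G.induce s).Connected ↔ (G'.induce t).Connected := by
  refine Iso.connected_iff
    ⟨Equiv.ofBijective (fun a => ⟨e ↑a, he.mapsTo a.2⟩)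
      ⟨fun a b hab => Subtype.ext (he.injOn a.2 b.2 (by simpa using hab)),
       fun b => by
        obtain ⟨a, ha, hab⟩ := he.surjOn b.2
        exact ⟨⟨a, ha⟩, Subtype.ext hab⟩⟩, fun {a b} => ?_⟩
  simp only [comap_adj, Function.Embedding.coe_subtype, Equiv.ofBijective_apply]
  exact (hadj ↑a a.2 ↑b b.2).symm

lemma singletonConn {α : Type*} (G : SimpleGraph α) (v : α) :
    (G.induce {v}).Connected := by
  rw [connected_iff]
  refine ⟨fun a b => ?_, ⟨⟨v, rfl⟩⟩⟩
  have : a = b := Subtype.ext (by rw [a.2, b.2])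
  rw [this]

-- splitting a Nat.card by a predicate
lemma cardSplit {α : Type*} (P Q : α → Prop) [Finite {x // P x}] :
    Nat.card {x // P x} = Nat.card {x // P x ∧ Q x} + Nat.card {x // P x ∧ ¬ Q x} := by
  classical
  haveI : Finite {x // P x ∧ Q x} :=
    Finite.of_injective (fun z => (⟨z.1, z.2.1⟩ : {x // P x}))
      (fun a b hab => Subtype.ext (by simpa using hab))
  haveI : Finite {x // P x ∧ ¬ Q x} :=
    Finite.of_injective (fun z => (⟨z.1, z.2.1⟩ : {x // P x}))
      (fun a b hab => Subtype.ext (by simpa using hab))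
  rw [← Nat.card_sum]
  refine Nat.card_congr ?_
  exact ((Equiv.sumCompl (fun y : {x // P x} => Q ↑y)).symm.trans
    (Equiv.sumCongr (Equiv.subtypeSubtypeEquivSubtypeInter P Q)
      (Equiv.subtypeSubtypeEquivSubtypeInter P (fun x => ¬ Q x))))


-- adjacency in attachPath _ u 1
lemma attachAdj {V : Type*} (H : SimpleGraph V) (u : V) (a b : V ⊕ Fin 1) :
    (attachPath H u 1).Adj a b ↔
      (∃ p q, a = Sum.inl p ∧ b = Sum.inl q ∧ H.Adj p q) ∨
      (a = Sum.inl u ∧ b = Sum.inr 0) ∨ (a = Sum.inr 0 ∧ b = Sum.inl u) := by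
  have fin1 : ∀ i j : Fin 1, ¬ ((i : ℕ) + 1 = (j : ℕ)) := by omega
  constructor
  · rintro ⟨hne, h | h⟩ <;>
      rcases h with ⟨p, q, rfl, rfl, h⟩ | ⟨i, j, rfl, rfl, h⟩ | ⟨h0, rfl, rfl⟩
    · exact Or.inl ⟨p, q, rfl, rfl, h⟩
    · exact absurd h (fin1 i j)
    · exact Or.inr (Or.inl ⟨rfl, rfl⟩)
    · exact Or.inl ⟨q, p, rfl, rfl, h.symm⟩
    · exact absurd h (fin1 i j)
    · exact Or.inr (Or.inr ⟨rfl, rfl⟩)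
  · rintro (⟨p, q, rfl, rfl, h⟩ | ⟨rfl, rfl⟩ | ⟨rfl, rfl⟩)
    · exact ⟨by simp [h.ne], Or.inl (Or.inl ⟨p, q, rfl, rfl, h⟩)⟩
    · exact ⟨by simp, Or.inl (Or.inr (Or.inr ⟨Nat.one_pos, rfl, rfl⟩))⟩
    · exact ⟨by simp, Or.inr (Or.inr (Or.inr ⟨Nat.one_pos, rfl, rfl⟩))⟩
section PendantA
variable {V : Type*} [DecidableEq V] (H : SimpleGraph V) (u : V)

noncomputable def downF (s : Finset (V ⊕ Fin 1)) : Finset V :=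
  s.preimage Sum.inl Sum.inl_injective.injOn

lemma mem_downF {s : Finset (V ⊕ Fin 1)} {a : V} : a ∈ downF s ↔ Sum.inl a ∈ s :=
  Finset.mem_preimage

lemma up_down {s : Finset (V ⊕ Fin 1)} (hp : Sum.inr 0 ∉ s) :
    (downF s).image (Sum.inl : V → V ⊕ Fin 1) = s := by
  ext z
  rcases z with a | i
  · simp [mem_downF]
  · rw [Fin.fin_one_eq_zero i]
    simp only [Finset.mem_image]
    constructor
    · rintro ⟨b, _, h⟩; exact absurd h (by simp)
    · intro h; exact absurd h hp

lemma down_up (t : Finset V) : downF (t.image (Sum.inl : V → V ⊕ Fin 1)) = t := by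
  ext a; simp [mem_downF]

lemma insert_up_down {s : Finset (V ⊕ Fin 1)} (hp : Sum.inr 0 ∈ s) :
    insert (Sum.inr 0) ((downF s).image (Sum.inl : V → V ⊕ Fin 1)) = s := by
  ext z
  rcases z with a | i
  · simp [mem_downF]
  · rw [Fin.fin_one_eq_zero i]
    simp [hp]

lemma down_insert (s : Finset (V ⊕ Fin 1)) :
    downF (insert (Sum.inr 0) s) = downF s := by
  ext a; simp [mem_downF]

lemma connUp (t : Finset V) :
    (H.induce ↑t).Connected ↔
      ((attachPath H u 1).induce ↑(t.image (Sum.inl : V → V ⊕ Fin 1))).Connected := by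
  have himg : (↑(t.image (Sum.inl : V → V ⊕ Fin 1)) : Set (V ⊕ Fin 1)) = Sum.inl '' ↑t := Finset.coe_image
  rw [himg]
  refine connHelper (Set.InjOn.bijOn_image Sum.inl_injective.injOn) ?_
  intro a _ b _
  simp [attachAdj]

lemma connPendantDown {s : Finset (V ⊕ Fin 1)} (hp : Sum.inr 0 ∈ s)
    (hne : (downF s).Nonempty)
    (h : ((attachPath H u 1).induce ↑s).Connected) :
    u ∈ downF s ∧ (H.induce ↑(downF s)).Connected := by
  obtain ⟨a, ha⟩ := hne
  have ha' : Sum.inl a ∈ s := mem_downF.mp ha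
  have hu : u ∈ downF s := by
    obtain ⟨w⟩ := h.preconnected ⟨Sum.inr 0, hp⟩ ⟨Sum.inl a, ha'⟩
    cases w with
    | @cons _ b _ hadj w' =>
      have hb : (attachPath H u 1).Adj (Sum.inr 0) ↑b := hadj
      rw [attachAdj] at hb
      rcases hb with ⟨p, q, hpq, _, _⟩ | ⟨hpq, _⟩ | ⟨_, hb⟩
      · exact absurd hpq (by simp)
      · exact absurd hpq (by simp)
      · exact mem_downF.mpr (hb ▸ b.2)
  refine ⟨hu, ?_⟩
  rw [connected_iff]
  refine ⟨?_, ⟨⟨a, ha⟩⟩⟩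
  have hcond : ∀ z w : (↑s : Set (V ⊕ Fin 1)),
      ((attachPath H u 1).induce ↑s).Adj z w →
      (H.induce ↑(downF s)).Adj
        (⟨Sum.elim id (fun _ => u) z.1, by
          rcases z with ⟨a' | i, hz⟩
          · exact mem_downF.mpr hz
          · exact hu⟩ : (↑(downF s) : Set V))
        ⟨Sum.elim id (fun _ => u) w.1, by
          rcases w with ⟨a' | i, hw⟩
          · exact mem_downF.mpr hw
          · exact hu⟩ ∨
      (⟨Sum.elim id (fun _ => u) z.1, by
          rcases z with ⟨a' | i, hz⟩
          · exact mem_downF.mpr hz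
          · exact hu⟩ : (↑(downF s) : Set V)) =
        ⟨Sum.elim id (fun _ => u) w.1, by
          rcases w with ⟨a' | i, hw⟩
          · exact mem_downF.mpr hw
          · exact hu⟩ := by
    rintro ⟨z1, hz1⟩ ⟨w1, hw1⟩ hzw
    have hzw' : (attachPath H u 1).Adj z1 w1 := hzw
    rw [attachAdj] at hzw'
    rcases hzw' with ⟨p, q, rfl, rfl, hpq⟩ | ⟨rfl, rfl⟩ | ⟨rfl, rfl⟩
    · exact Or.inl hpq
    · exact Or.inr (Subtype.ext rfl)
    · exact Or.inr (Subtype.ext rfl)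
  intro c d
  have := reachHelper _ hcond
    (h.preconnected ⟨Sum.inl ↑c, mem_downF.mp c.2⟩ ⟨Sum.inl ↑d, mem_downF.mp d.2⟩)
  exact this

lemma connInsert {t : Finset V} (hu : u ∈ t) (h : (H.induce ↑t).Connected) :
    ((attachPath H u 1).induce ↑(insert (Sum.inr 0) (t.image (Sum.inl : V → V ⊕ Fin 1)))).Connected := by
  have hset : (↑(insert (Sum.inr 0 : V ⊕ Fin 1) (t.image (Sum.inl : V → V ⊕ Fin 1))) : Set (V ⊕ Fin 1)) =
      {Sum.inr 0} ∪ ↑(t.image (Sum.inl : V → V ⊕ Fin 1)) := by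
    rw [Finset.coe_insert, Set.insert_eq]
  rw [hset]
  refine connected_induce_union (v := Sum.inr 0) (w := Sum.inl u) (singletonConn _ _).preconnected ((connUp H u t).mp h).preconnected
    (Set.mem_singleton _) ?_ ?_
  · exact Finset.mem_coe.mpr (Finset.mem_image_of_mem _ hu)
  · rw [attachAdj]; exact Or.inr (Or.inr ⟨rfl, rfl⟩)

end PendantA

lemma numCIS_attach {V : Type*} [Fintype V] (H : SimpleGraph V) (u : V) :
    numCIS (attachPath H u 1) = numCIS H + 1 + numCISat H u := by
  classical
  rw [numCIS,
    cardSplit (fun s : Finset (V ⊕ Fin 1) =>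
        s.Nonempty ∧ ((attachPath H u 1).induce (↑s : Set (V ⊕ Fin 1))).Connected)
      (fun s => Sum.inr 0 ∈ s),
    cardSplit (fun s : Finset (V ⊕ Fin 1) =>
        (s.Nonempty ∧ ((attachPath H u 1).induce (↑s : Set (V ⊕ Fin 1))).Connected)
          ∧ Sum.inr 0 ∈ s)
      (fun s => (downF s).Nonempty)]
  have e1 : Nat.card {s : Finset (V ⊕ Fin 1) //
      (s.Nonempty ∧ ((attachPath H u 1).induce (↑s : Set (V ⊕ Fin 1))).Connected)
        ∧ ¬ Sum.inr 0 ∈ s} = numCIS H := by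
    refine Nat.card_congr ⟨fun s => ⟨downF s.1, ?_, ?_⟩,
      fun t => ⟨t.1.image (Sum.inl : V → V ⊕ Fin 1), ⟨t.2.1.image Sum.inl, (connUp H u t.1).mp t.2.2⟩,
        by simp⟩, fun s => Subtype.ext (up_down s.2.2), fun t => Subtype.ext (down_up t.1)⟩
    · obtain ⟨⟨⟨z, hz⟩, _⟩, hp⟩ := s.2
      rcases z with a | i
      · exact ⟨a, mem_downF.mpr hz⟩
      · exact absurd hz (by rw [Fin.fin_one_eq_zero i]; exact hp)
    · exact (connUp H u (downF s.1)).mpr (by rw [up_down s.2.2]; exact s.2.1.2)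
  have e2 : Nat.card {s : Finset (V ⊕ Fin 1) //
      ((s.Nonempty ∧ ((attachPath H u 1).induce (↑s : Set (V ⊕ Fin 1))).Connected)
        ∧ Sum.inr 0 ∈ s) ∧ ¬ (downF s).Nonempty} = 1 := by
    rw [Nat.card_eq_one_iff_unique]
    refine ⟨⟨fun p q => ?_⟩, ?_⟩
    · obtain ⟨s, ⟨⟨_, hp⟩, hne⟩⟩ := p
      obtain ⟨t, ⟨⟨_, hq⟩, tne⟩⟩ := q
      have hs := Finset.not_nonempty_iff_eq_empty.mp hne
      have ht := Finset.not_nonempty_iff_eq_empty.mp tne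
      refine Subtype.ext (Finset.ext fun z => ?_)
      rcases z with a | i
      · constructor
        · intro h; exact absurd (mem_downF.mpr h) (by rw [hs]; simp)
        · intro h; exact absurd (mem_downF.mpr h) (by rw [ht]; simp)
      · rw [Fin.fin_one_eq_zero i]; exact ⟨fun _ => hq, fun _ => hp⟩
    · refine ⟨⟨{Sum.inr 0}, ⟨⟨Finset.singleton_nonempty _, ?_⟩, Finset.mem_singleton_self _⟩,
        ?_⟩⟩
      · have : (↑({Sum.inr 0} : Finset (V ⊕ Fin 1)) : Set (V ⊕ Fin 1)) = {Sum.inr 0} := by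
          simp
        rw [this]; exact singletonConn _ _
      · rw [Finset.not_nonempty_iff_eq_empty]
        ext a; simp [mem_downF]
  have e3 : Nat.card {s : Finset (V ⊕ Fin 1) //
      ((s.Nonempty ∧ ((attachPath H u 1).induce (↑s : Set (V ⊕ Fin 1))).Connected)
        ∧ Sum.inr 0 ∈ s) ∧ (downF s).Nonempty} = numCISat H u := by
    refine Nat.card_congr ⟨fun s =>
        ⟨downF s.1, (connPendantDown H u s.2.1.2 s.2.2 s.2.1.1.2).1,
          (connPendantDown H u s.2.1.2 s.2.2 s.2.1.1.2).2⟩,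
      fun t => ⟨insert (Sum.inr 0) (t.1.image (Sum.inl : V → V ⊕ Fin 1)),
        ⟨⟨Finset.insert_nonempty _ _, connInsert H u t.2.1 t.2.2⟩,
          Finset.mem_insert_self _ _⟩,
        by rw [down_insert, down_up]; exact ⟨u, t.2.1⟩⟩,
      fun s => Subtype.ext (insert_up_down s.2.1.2),
      fun t => Subtype.ext (by
        show downF (insert (Sum.inr 0) (t.1.image (Sum.inl : V → V ⊕ Fin 1))) = t.1
        rw [down_insert, down_up])⟩
  rw [e1, e2, e3]
  omega

section PartB
variable {V : Type*} (H : SimpleGraph V)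

lemma connDel {y : V} {s : Finset V} (hy : y ∉ s) :
    (H.induce ↑s).Connected ↔
      ((H.induce ({y}ᶜ : Set V)).induce
        ↑(s.preimage (Subtype.val : ({y}ᶜ : Set V) → V) Subtype.val_injective.injOn)).Connected := by
  refine (connHelper (e := (Subtype.val : ({y}ᶜ : Set V) → V)) ⟨?_, ?_, ?_⟩ ?_).symm
  · intro a ha
    exact Finset.mem_coe.mpr (Finset.mem_preimage.mp (Finset.mem_coe.mp ha))
  · exact Subtype.val_injective.injOn
  · intro a ha
    have hay : a ≠ y := fun h => hy (h ▸ Finset.mem_coe.mp ha)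
    exact ⟨⟨a, by simpa using hay⟩, Finset.mem_coe.mpr
      (Finset.mem_preimage.mpr (Finset.mem_coe.mp ha)), rfl⟩
  · intro a _ b _
    simp [comap_adj]

lemma numCISat_split [Fintype V] (x y : V) (hxy : x ≠ y)
    (hx : x ∈ ({y}ᶜ : Set V)) :
    numCISat H x = numCISat2 H x y
      + numCISat (H.induce ({y}ᶜ : Set V)) ⟨x, hx⟩ := by
  classical
  rw [numCISat,
    cardSplit (fun s : Finset V => x ∈ s ∧ (H.induce (↑s : Set V)).Connected)
      (fun s => y ∈ s)]
  have e1 : Nat.card {s : Finset V //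
      (x ∈ s ∧ (H.induce (↑s : Set V)).Connected) ∧ y ∈ s} = numCISat2 H x y :=
    Nat.card_congr (Equiv.subtypeEquivRight (fun s => by tauto))
  have e2 : Nat.card {s : Finset V //
      (x ∈ s ∧ (H.induce (↑s : Set V)).Connected) ∧ ¬ y ∈ s} =
      numCISat (H.induce ({y}ᶜ : Set V)) ⟨x, hx⟩ := by
    refine Nat.card_congr ⟨fun s =>
        ⟨s.1.preimage (Subtype.val : ({y}ᶜ : Set V) → V) Subtype.val_injective.injOn,
          Finset.mem_preimage.mpr s.2.1.1, (connDel H s.2.2).mp s.2.1.2⟩,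
      fun t => ⟨t.1.image Subtype.val, ⟨?_, ?_⟩, ?_⟩, fun s => Subtype.ext ?_,
      fun t => Subtype.ext ?_⟩
    · exact Finset.mem_image.mpr ⟨⟨x, hx⟩, t.2.1, rfl⟩
    · have hy : y ∉ t.1.image Subtype.val := by
        intro h
        obtain ⟨⟨a, ha⟩, _, h2⟩ := Finset.mem_image.mp h
        have : a ≠ y := by simpa using ha
        exact this h2
      rw [connDel H hy]
      have : (t.1.image Subtype.val).preimage (Subtype.val : ({y}ᶜ : Set V) → V)
          Subtype.val_injective.injOn = t.1 := by
        ext a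
        simp [Finset.mem_preimage, Subtype.val_injective.eq_iff]
      rw [this]
      exact t.2.2
    · intro h
      obtain ⟨⟨a, ha⟩, _, h2⟩ := Finset.mem_image.mp h
      have : a ≠ y := by simpa using ha
      exact this h2
    · ext a
      simp only [Finset.mem_image, Finset.mem_preimage]
      constructor
      · rintro ⟨⟨b, hb⟩, h1, rfl⟩; exact h1
      · intro ha
        have hay : a ≠ y := fun h => s.2.2 (h ▸ ha)
        exact ⟨⟨a, by simpa using hay⟩, ha, rfl⟩
    · ext a
      simp [Finset.mem_preimage, Subtype.val_injective.eq_iff]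
  rw [e1, e2]

lemma numCISat2_comm [Fintype V] (x y : V) : numCISat2 H x y = numCISat2 H y x :=
  Nat.card_congr (Equiv.subtypeEquivRight (fun s => by tauto))

end PartB

/-- If `G` is obtained from `H` by attaching a pendant edge at `y`, and `G'` by
attaching a pendant edge at `x`, then
`N(G') - N(G) = N(H)_x - N(H)_y = N(H-y)_x - N(H-x)_y`. -/
theorem numCIS_pendant_move {V : Type*} [Fintype V] (H : SimpleGraph V) (hH : H.Connected)
    (x y : V) (hxy : x ≠ y) :
    ((numCIS (attachPath H x 1) : ℤ) - numCIS (attachPath H y 1) =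
      (numCISat H x : ℤ) - numCISat H y) ∧
    ((numCISat H x : ℤ) - numCISat H y =
      (numCISat (H.induce ({y}ᶜ : Set V)) ⟨x, by simp [hxy]⟩ : ℤ) -
        numCISat (H.induce ({x}ᶜ : Set V)) ⟨y, by simp [hxy.symm]⟩) := by
  classical
  have hA := numCIS_attach H x
  have hB := numCIS_attach H y
  refine ⟨?_, ?_⟩
  · rw [hA, hB]; push_cast; ring
  · have hx' : x ∈ ({y}ᶜ : Set V) := by simp [hxy]
    have hy' : y ∈ ({x}ᶜ : Set V) := by simp [hxy.symm]
    show (numCISat H x : ℤ) - numCISat H y =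
      (numCISat (H.induce ({y}ᶜ : Set V)) ⟨x, hx'⟩ : ℤ) -
        numCISat (H.induce ({x}ᶜ : Set V)) ⟨y, hy'⟩
    rw [numCISat_split H x y hxy hx', numCISat_split H y x hxy.symm hy',
      numCISat2_comm H x y]
    push_cast; ring
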